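/- arXiv:2206.04477 — 2 statements merged into one kernel-verified Lean document; each statement's English description precedes it below -/
import Mathlib

section
/- Let P and Q be probability measures on a measurable space. Then the total variation distance satisfies D_TV(P, Q) ≤ √(D_KL(P ∥ Q) / 2). -/
open MeasureTheory ProbabilityTheory ENNReal Classical

variable {α : Type*} [MeasurableSpace α]

/-- Kullback–Leibler divergence of `P` with respect to `Q`, valued in `ℝ≥0∞`;
it is `⊤` if `P` is not absolutely continuous with respect to `Q` (or the
log-likelihood ratio is not integrable). -/
noncomputable def klDiv (P Q : Measure α) : ℝ≥0∞ :=
  if P ≪ Q ∧ Integrable (llr P Q) P then ENNReal.ofReal (∫ x, llr P Q x ∂P) else ⊤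

/-- Total variation distance between two measures:
`sup` over measurable sets `A` of `|P(A) − Q(A)|`. -/
noncomputable def tvDist (P Q : Measure α) : ℝ :=
  ⨆ A : {s : Set α // MeasurableSet s}, |(P A).toReal - (Q A).toReal|


private lemma aux_G {x : ℝ} (hx : 1 ≤ x) : 2 * (x - 1) ≤ (x + 1) * Real.log x := by
  set G : ℝ → ℝ := fun y => (y + 1) * Real.log y - 2 * (y - 1) with hG
  have hderiv : ∀ y : ℝ, 0 < y → HasDerivAt G (Real.log y + (y + 1) * y⁻¹ - 2) y := by
    intro y hy
    have h1 : HasDerivAt (fun z : ℝ => (z + 1) * Real.log z)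
        (1 * Real.log y + (y + 1) * y⁻¹) y :=
      ((hasDerivAt_id y).add_const 1).mul (Real.hasDerivAt_log hy.ne')
    have h2 : HasDerivAt (fun z : ℝ => 2 * (z - 1)) 2 y := by
      simpa using ((hasDerivAt_id y).sub_const 1).const_mul 2
    have := h1.sub h2
    refine this.congr_deriv ?_
    ring
  have hmono : MonotoneOn G (Set.Ici 1) := by
    apply monotoneOn_of_deriv_nonneg (convex_Ici 1)
    · apply ContinuousOn.sub
      · exact (continuousOn_id.add continuousOn_const).mul
          (Real.continuousOn_log.mono (by intro y hy; simp at hy ⊢; linarith))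
      · fun_prop
    · intro y hy
      rw [interior_Ici] at hy
      exact ((hderiv y (by simp at hy; linarith)).differentiableAt).differentiableWithinAt
    · intro y hy
      rw [interior_Ici] at hy
      have hy1 : (1:ℝ) < y := hy
      have hy0 : (0:ℝ) < y := by linarith
      rw [(hderiv y hy0).deriv]
      have hlog : Real.log y⁻¹ ≤ y⁻¹ - 1 := Real.log_le_sub_one_of_pos (by positivity)
      rw [Real.log_inv] at hlog
      have hinv : (y + 1) * y⁻¹ = 1 + y⁻¹ := by field_simp
      rw [hinv]
      linarith
  have h1 : G 1 ≤ G x := hmono (by simp) hx hx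
  simp [hG] at h1
  linarith [h1]

private lemma aux_G' {x : ℝ} (hx0 : 0 < x) (hx1 : x ≤ 1) :
    (x + 1) * Real.log x ≤ 2 * (x - 1) := by
  have h := aux_G (x := x⁻¹) (one_le_inv_iff₀.mpr ⟨hx0, hx1⟩ )
  rw [Real.log_inv] at h
  have h2 := mul_le_mul_of_nonneg_left h hx0.le
  have hxi : x * x⁻¹ = 1 := mul_inv_cancel₀ hx0.ne'
  nlinarith [h2, hxi]

private lemma key_ineq {x : ℝ} (hx : 0 ≤ x) :
    3 * (x - 1) ^ 2 ≤ 2 * (x + 2) * (x * Real.log x - x + 1) := by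
  set F : ℝ → ℝ := fun y => 2 * (y + 2) * (y * Real.log y - y + 1) - 3 * (y - 1) ^ 2 with hF
  have hcont : Continuous F := by
    apply Continuous.sub
    · exact (continuous_const.mul (continuous_id.add continuous_const)).mul
        ((Real.continuous_mul_log.sub continuous_id).add continuous_const)
    · continuity
  have hderiv : ∀ y : ℝ, 0 < y →
      HasDerivAt F (4 * ((y + 1) * Real.log y - 2 * (y - 1))) y := by
    intro y hy
    have h1 : HasDerivAt (fun z : ℝ => z * Real.log z - z + 1) (Real.log y) y := by
      have := ((Real.hasDerivAt_mul_log hy.ne').sub (hasDerivAt_id y)).add_const 1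
      refine this.congr_deriv ?_
      simp
    have h2 : HasDerivAt (fun z : ℝ => 2 * (z + 2)) 2 y := by
      simpa using ((hasDerivAt_id y).add_const 2).const_mul 2
    have h3 := h2.mul h1
    have h4 : HasDerivAt (fun z : ℝ => 3 * (z - 1) ^ 2) (3 * (2 * (y - 1))) y := by
      have := (((hasDerivAt_id y).sub_const 1).pow 2).const_mul 3
      refine this.congr_deriv ?_
      simp
    have := h3.sub h4
    refine this.congr_deriv ?_
    ring
  have hF1 : F 1 = 0 := by simp [hF]
  have hkey : 0 ≤ F x := by
    rcases le_total 1 x with h1x | hx1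
    · have hmono : MonotoneOn F (Set.Ici 1) := by
        apply monotoneOn_of_deriv_nonneg (convex_Ici 1) hcont.continuousOn
        · intro y hy
          rw [interior_Ici] at hy
          exact ((hderiv y (by simp at hy; linarith)).differentiableAt).differentiableWithinAt
        · intro y hy
          rw [interior_Ici] at hy
          have hy1 : (1:ℝ) ≤ y := le_of_lt hy
          rw [(hderiv y (by linarith)).deriv]
          have := aux_G hy1
          linarith
      have := hmono (by simp) h1x h1x
      rw [hF1] at this
      exact this
    · have hanti : AntitoneOn F (Set.Icc 0 1) := by
        apply antitoneOn_of_deriv_nonpos (convex_Icc 0 1) hcont.continuousOn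
        · intro y hy
          rw [interior_Icc] at hy
          exact ((hderiv y hy.1).differentiableAt).differentiableWithinAt
        · intro y hy
          rw [interior_Icc] at hy
          rw [(hderiv y hy.1).deriv]
          have := aux_G' hy.1 hy.2.le
          linarith
      have := hanti (Set.mem_Icc.mpr ⟨hx, hx1⟩) (by simp) hx1
      rw [hF1] at this
      exact this
  simp only [hF] at hkey
  linarith

private lemma phi_nonneg {x : ℝ} (hx : 0 ≤ x) : 0 ≤ x * Real.log x - x + 1 := by
  nlinarith [key_ineq hx, sq_nonneg (x - 1)]

private lemma pointwise_pinsker {x t : ℝ} (hx : 0 ≤ x) (ht : 0 < t) :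
    6 * t * |x - 1| ≤ 3 * t ^ 2 * (x * Real.log x - x + 1) + 2 * (x + 2) := by
  have hk := key_ineq hx
  have h5 : 3 * t ^ 2 * (3 * (x - 1) ^ 2)
      ≤ 3 * t ^ 2 * (2 * (x + 2) * (x * Real.log x - x + 1)) :=
    mul_le_mul_of_nonneg_left hk (by positivity)
  nlinarith [sq_nonneg (3 * t * |x - 1| - 2 * (x + 2)), sq_abs (x - 1), abs_nonneg (x - 1),
    phi_nonneg hx, mul_pos ht ht]

/-- Pinsker's inequality: `D_TV(P, Q) ≤ √(D_KL(P ∥ Q) / 2)`, stated in the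
equivalent squared form `2 · D_TV(P,Q)² ≤ D_KL(P ∥ Q)` (which also covers the
trivial case `D_KL = ⊤`). -/
theorem pinsker_inequality (P Q : Measure α)
    [IsProbabilityMeasure P] [IsProbabilityMeasure Q] :
    ENNReal.ofReal (2 * (tvDist P Q) ^ 2) ≤ klDiv P Q := by
  by_cases hc : P ≪ Q ∧ Integrable (llr P Q) P
  · obtain ⟨hac, hint⟩ := hc
    rw [klDiv, if_pos ⟨hac, hint⟩]
    apply ENNReal.ofReal_le_ofReal
    set g : α → ℝ := fun x => (P.rnDeriv Q x).toReal with hg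
    have hg_nonneg : ∀ x, 0 ≤ g x := fun x => ENNReal.toReal_nonneg
    have hg_int : Integrable g Q := Measure.integrable_toReal_rnDeriv
    have hg_one : ∫ x, g x ∂Q = 1 := by
      rw [hg]; rw [Measure.integral_toReal_rnDeriv hac]; simp
    set K : ℝ := ∫ x, llr P Q x ∂P with hK
    have hK_eq : ∫ x, g x * Real.log (g x) ∂Q = K := by
      rw [hK, ← integral_rnDeriv_smul hac (f := llr P Q)]
      simp [llr, hg, smul_eq_mul]
    have hmul_int : Integrable (fun x => g x * Real.log (g x)) Q := by
      have := (integrable_rnDeriv_smul_iff hac (f := llr P Q)).mpr hint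
      simpa [llr, hg, smul_eq_mul] using this
    have hsub_int : Integrable (fun x => g x * Real.log (g x) - g x) Q := hmul_int.sub hg_int
    have hphi_int : Integrable (fun x => g x * Real.log (g x) - g x + 1) Q :=
      hsub_int.add (integrable_const 1)
    have hphi_eq : ∫ x, (g x * Real.log (g x) - g x + 1) ∂Q = K := by
      rw [integral_add hsub_int (integrable_const 1),
        integral_sub hmul_int hg_int, hg_one, hK_eq, integral_const]
      simp
    have hK_nonneg : 0 ≤ K := by
      rw [← hphi_eq]
      exact integral_nonneg fun x => phi_nonneg (hg_nonneg x)
    -- S : total variation integral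
    have hgm1_int : Integrable (fun x => g x - 1) Q := hg_int.sub (integrable_const 1)
    set S : ℝ := ∫ x, |g x - 1| ∂Q with hS
    have hS_int : Integrable (fun x => |g x - 1|) Q := hgm1_int.abs
    have hS_nonneg : 0 ≤ S := integral_nonneg fun x => abs_nonneg _
    -- tvDist ≤ S / 2
    have h_bound : ∀ A : {s : Set α // MeasurableSet s},
        |(P A).toReal - (Q A).toReal| ≤ S / 2 := by
      rintro ⟨s, hs⟩
      have hPs : ((P : Measure α) s).toReal = ∫ x in s, g x ∂Q :=
        (Measure.setIntegral_toReal_rnDeriv hac s).symm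
      have hQs : ((Q : Measure α) s).toReal = ∫ x in s, (1 : ℝ) ∂Q := by
        simp [integral_const, Measure.real]
      have hdiff : (P s).toReal - (Q s).toReal = ∫ x in s, (g x - 1) ∂Q := by
        rw [hPs, hQs, integral_sub hg_int.integrableOn (integrable_const 1).integrableOn]
      have hsum : ∫ x in s, (g x - 1) ∂Q + ∫ x in sᶜ, (g x - 1) ∂Q = 0 := by
        rw [integral_add_compl hs hgm1_int,
          integral_sub hg_int (integrable_const 1), hg_one, integral_const]
        simp
      have habs1 : |∫ x in s, (g x - 1) ∂Q| ≤ ∫ x in s, |g x - 1| ∂Q := by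
        simpa [Real.norm_eq_abs] using
          norm_integral_le_integral_norm (μ := Q.restrict s) (fun x => g x - 1)
      have habs2 : |∫ x in sᶜ, (g x - 1) ∂Q| ≤ ∫ x in sᶜ, |g x - 1| ∂Q := by
        simpa [Real.norm_eq_abs] using
          norm_integral_le_integral_norm (μ := Q.restrict sᶜ) (fun x => g x - 1)
      have hSsum : ∫ x in s, |g x - 1| ∂Q + ∫ x in sᶜ, |g x - 1| ∂Q = S :=
        integral_add_compl hs hS_int
      have heq : |∫ x in sᶜ, (g x - 1) ∂Q| = |∫ x in s, (g x - 1) ∂Q| := by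
        rw [show ∫ x in sᶜ, (g x - 1) ∂Q = -∫ x in s, (g x - 1) ∂Q by linarith, abs_neg]
      rw [hdiff]
      rw [heq] at habs2
      linarith
    have hbdd : BddAbove (Set.range fun A : {s : Set α // MeasurableSet s} =>
        |(P A).toReal - (Q A).toReal|) := ⟨S / 2, by rintro _ ⟨A, rfl⟩; exact h_bound A⟩
    have htv_le : tvDist P Q ≤ S / 2 := ciSup_le h_bound
    have htv_nonneg : 0 ≤ tvDist P Q := by
      have := le_ciSup hbdd (⟨∅, MeasurableSet.empty⟩ : {s : Set α // MeasurableSet s})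
      exact le_trans (abs_nonneg _) this
    -- key integral inequality
    have hmain : ∀ t : ℝ, 0 < t → 6 * t * S ≤ 3 * t ^ 2 * K + 6 := by
      intro t ht
      have hle : ∫ x, 6 * t * |g x - 1| ∂Q
          ≤ ∫ x, (3 * t ^ 2 * (g x * Real.log (g x) - g x + 1) + 2 * (g x + 2)) ∂Q := by
        apply integral_mono (hS_int.const_mul _)
        · exact (hphi_int.const_mul _).add ((hg_int.add (integrable_const 2)).const_mul 2)
        · intro x
          exact pointwise_pinsker (hg_nonneg x) ht
      have hadd_int : Integrable (fun x => g x + 2) Q := hg_int.add (integrable_const 2)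
      rw [integral_const_mul, integral_add (hphi_int.const_mul _) (hadd_int.const_mul 2),
        integral_const_mul, integral_const_mul, integral_add hg_int (integrable_const 2),
        hg_one, hphi_eq, integral_const] at hle
      simp at hle
      linarith
    -- S ^ 2 ≤ 2 * K
    have hS2 : S ^ 2 ≤ 2 * K := by
      rcases eq_or_lt_of_le hS_nonneg with hS0 | hSpos
      · nlinarith [hK_nonneg]
      rcases eq_or_lt_of_le hK_nonneg with hK0 | hKpos
      · exfalso
        have h := hmain (2 / S) (by positivity)
        rw [← hK0] at h
        have : (2 / S) * S = 2 := div_mul_cancel₀ 2 hSpos.ne'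
        nlinarith
      · have h := hmain (S / K) (by positivity)
        have hKne : K ≠ 0 := hKpos.ne'
        have h1 : (S / K) * S = S ^ 2 / K := by field_simp
        have h2 : (S / K) ^ 2 * K = S ^ 2 / K := by field_simp
        rw [mul_assoc, h1] at h
        rw [show 3 * (S / K) ^ 2 * K = 3 * ((S / K) ^ 2 * K) by ring, h2] at h
        have h3 : S ^ 2 / K * K = S ^ 2 := div_mul_cancel₀ _ hKne
        nlinarith [mul_le_mul_of_nonneg_right h hKpos.le]
    nlinarith [htv_le, htv_nonneg, hS2, hS_nonneg]
  · rw [klDiv, if_neg hc]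
    exact le_top
end

section
/- Let P and Q be joint probability distributions of a pair of random variables (a, b) on finite sets A and B such that P(b|a) = Q(b|a) for all a with Q(a) > 0. Then for any convex function f, Σ_a Q(a)·f(P(a)/Q(a)) ≥ Σ_b Q(b)·f(P(b)/Q(b)), where P(a), Q(a), P(b), Q(b) denote the marginal distributions. -/
open Finset

/-- Information-loss (data-processing) inequality for f-divergences: if the joint
distributions `P` and `Q` on `A × B` share the same conditional `P(b|a) = Q(b|a)`
(expressed cross-multiplied) and `Q` has positive marginals, then for any convex
`f`, the f-divergence of the `a`-marginals dominates that of the `b`-marginals. -/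
theorem information_loss {A B : Type*} [Fintype A] [Fintype B]
    (P Q : A → B → ℝ)
    (hP : ∀ a b, 0 ≤ P a b) (hQ : ∀ a b, 0 ≤ Q a b)
    (hPsum : ∑ a, ∑ b, P a b = 1) (hQsum : ∑ a, ∑ b, Q a b = 1)
    (hQa : ∀ a, 0 < ∑ b, Q a b) (hQb : ∀ b, 0 < ∑ a, Q a b)
    (hcond : ∀ a, 0 < ∑ b, Q a b →
      ∀ b, P a b * (∑ b', Q a b') = (∑ b', P a b') * Q a b)
    (f : ℝ → ℝ) (hf : ConvexOn ℝ Set.univ f) :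
    ∑ b, (∑ a, Q a b) * f ((∑ a, P a b) / (∑ a, Q a b)) ≤
      ∑ a, (∑ b, Q a b) * f ((∑ b, P a b) / (∑ b, Q a b)) := by
  set r : A → ℝ := fun a => (∑ b, P a b) / (∑ b, Q a b) with hr
  -- P a b = r a * Q a b
  have hPQ : ∀ a b, P a b = r a * Q a b := by
    intro a b
    have h := hcond a (hQa a) b
    have hne : (∑ b, Q a b) ≠ 0 := (hQa a).ne'
    rw [hr]
    field_simp
    linarith [h]
  -- key pointwise bound for each b
  have key : ∀ b, (∑ a, Q a b) * f ((∑ a, P a b) / (∑ a, Q a b)) ≤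
      ∑ a, Q a b * f (r a) := by
    intro b
    have hQbpos := hQb b
    have hQbne : (∑ a, Q a b) ≠ 0 := hQbpos.ne'
    set w : A → ℝ := fun a => Q a b / (∑ a, Q a b) with hw
    have hw0 : ∀ a ∈ univ, (0:ℝ) ≤ w a := fun a _ =>
      div_nonneg (hQ a b) hQbpos.le
    have hw1 : ∑ a, w a = 1 := by
      rw [hw, ← Finset.sum_div, div_self hQbne]
    have hmem : ∀ a ∈ (univ : Finset A), r a ∈ Set.univ := fun _ _ => Set.mem_univ _
    have hjensen := hf.map_sum_le hw0 hw1 hmem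
    have harg : ∑ a, w a • r a = (∑ a, P a b) / (∑ a, Q a b) := by
      rw [show ∑ a, P a b = ∑ a, r a * Q a b from by
        exact Finset.sum_congr rfl fun a _ => hPQ a b]
      rw [Finset.sum_div]
      refine Finset.sum_congr rfl fun a _ => ?_
      simp [hw, smul_eq_mul]
      ring
    rw [harg] at hjensen
    calc (∑ a, Q a b) * f ((∑ a, P a b) / (∑ a, Q a b))
        ≤ (∑ a, Q a b) * ∑ a, w a • f (r a) := by
          exact mul_le_mul_of_nonneg_left hjensen hQbpos.le
      _ = ∑ a, Q a b * f (r a) := by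
          rw [Finset.mul_sum]
          refine Finset.sum_congr rfl fun a _ => ?_
          simp [hw, smul_eq_mul]
          field_simp
  calc ∑ b, (∑ a, Q a b) * f ((∑ a, P a b) / (∑ a, Q a b))
      ≤ ∑ b, ∑ a, Q a b * f (r a) := Finset.sum_le_sum fun b _ => key b
    _ = ∑ a, (∑ b, Q a b) * f (r a) := by
        rw [Finset.sum_comm]
        exact Finset.sum_congr rfl fun a _ => by rw [Finset.sum_mul]
    _ = ∑ a, (∑ b, Q a b) * f ((∑ b, P a b) / (∑ b, Q a b)) := rfl
end
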